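/- Let (A, \mu, \alpha) be a multiplicative Hom-associative algebra, (V, \beta) an A-bimodule with \beta(v\cdot a)=\beta(v)\cdot\alpha(a) and \beta(a\cdot v)=\alpha(a)\cdot\beta(v), and b = \sum_{i=0}^n (-1)^i \delta_i : V \otimes A^{\otimes n} \to V \otimes A^{\otimes n-1} the alternating sum of the Hom-Hochschild face maps. Then b \circ b = 0. -/

import Mathlib

set_option linter.unusedSectionVars false
set_option linter.unreachableTactic false
set_option linter.unusedTactic false
set_option maxHeartbeats 1000000


/-- The `i`-th Hochschild face map of the Hom-Hochschild complex `C_n(A,V) = V ⊗ A^{⊗n}`,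
acting on elementary tensors (represented as pairs of a vector and a tuple). -/
def homFace {A V : Type*} [Mul A] (α : A → A) (β : V → V)
    (l : A → V → V) (r : V → A → V) (n : ℕ) (i : Fin (n + 2))
    (x : V × (Fin (n + 1) → A)) : V × (Fin n → A) :=
  if (i : ℕ) = 0 then (r x.1 (x.2 0), fun j => α (x.2 j.succ))
  else if (i : ℕ) = n + 1 then (l (x.2 (Fin.last n)) x.1, fun j => α (x.2 j.castSucc))
  else (β x.1, fun j =>
    if (j : ℕ) + 1 < (i : ℕ) then α (x.2 j.castSucc)
    else if (j : ℕ) + 1 = (i : ℕ) then x.2 j.castSucc * x.2 j.succ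
    else α (x.2 j.succ))

section lemmas
variable {A V : Type*} [Mul A] (α : A → A) (β : V → V)
    (l : A → V → V) (r : V → A → V) (n : ℕ)

lemma homFace_zero (i : Fin (n+2)) (h : (i:ℕ) = 0) (x : V × (Fin (n + 1) → A)) :
    homFace α β l r n i x = (r x.1 (x.2 0), fun j => α (x.2 j.succ)) := by
  simp [homFace, h]

lemma homFace_last (i : Fin (n+2)) (h : (i:ℕ) = n + 1) (x : V × (Fin (n + 1) → A)) :
    homFace α β l r n i x = (l (x.2 (Fin.last n)) x.1, fun j => α (x.2 j.castSucc)) := by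
  simp [homFace, h]

lemma homFace_mid (i : Fin (n+2)) (h0 : 0 < (i:ℕ)) (h1 : (i:ℕ) ≤ n) (x : V × (Fin (n + 1) → A)) :
    homFace α β l r n i x = (β x.1, fun j : Fin n =>
      if (j : ℕ) + 1 < (i : ℕ) then α (x.2 j.castSucc)
      else if (j : ℕ) + 1 = (i : ℕ) then x.2 j.castSucc * x.2 j.succ
      else α (x.2 j.succ)) := by
  have e0 : ¬ (i:ℕ) = 0 := by omega
  have e1 : ¬ (i:ℕ) = n+1 := by omega
  simp [homFace, e0, e1]

variable
    (hassoc : ∀ a b c : A, α a * (b * c) = (a * b) * α c)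
    (hmul : ∀ a b : A, α (a * b) = α a * α b)
    (hlmod : ∀ (a b : A) (v : V), l (a * b) (β v) = l (α a) (l b v))
    (hrmod : ∀ (a b : A) (v : V), r (β v) (a * b) = r (r v a) (α b))
    (hbi : ∀ (a b : A) (v : V), l (α a) (r v b) = r (l a v) (α b))
    (hβr : ∀ (a : A) (v : V), β (r v a) = r (β v) (α a))
    (hβl : ∀ (a : A) (v : V), β (l a v) = l (α a) (β v))

include hassoc hmul hlmod hrmod hbi hβr hβl in
lemma homFace_comp (i : Fin (n+2)) (j : Fin (n+3)) (h : (j:ℕ) ≤ (i:ℕ))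
    (x : V × (Fin (n + 2) → A)) :
    homFace α β l r n i (homFace α β l r (n+1) j x) =
      homFace α β l r n ⟨(j:ℕ), by omega⟩ (homFace α β l r (n+1) i.succ x) := by
  have hsucc : (i.succ : ℕ) = (i:ℕ) + 1 := rfl
  have hmk : ((⟨(j:ℕ), by omega⟩ : Fin (n+2)) : ℕ) = (j:ℕ) := rfl
  by_cases hj0 : (j:ℕ) = 0
  · by_cases hi0 : (i:ℕ) = 0
    · -- A1 : i = j = 0
      rw [homFace_zero _ _ _ _ _ j hj0, homFace_zero _ _ _ _ _ i hi0,
        homFace_mid _ _ _ _ _ i.succ (by omega) (by omega),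
        homFace_zero _ _ _ _ _ _ (by simpa using hj0)]
      refine Prod.ext ?_ (funext fun t => ?_)
      · dsimp only
        rw [if_neg (by simp only [Fin.val_succ, Fin.val_zero]; omega),
          if_pos (by simp only [Fin.val_succ, Fin.val_zero]; omega), hrmod]
        simp
      · dsimp only
        rw [if_neg (by simp only [Fin.val_succ]; omega),
          if_neg (by simp only [Fin.val_succ]; omega)]
    · by_cases hiL : (i:ℕ) = n+1
      · -- A3 : j = 0, i = n+1
        rw [homFace_zero _ _ _ _ _ j hj0, homFace_last _ _ _ _ _ i hiL,
          homFace_last _ _ _ _ _ i.succ (by omega),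
          homFace_zero _ _ _ _ _ _ (by simpa using hj0)]
        refine Prod.ext ?_ (funext fun t => ?_)
        · dsimp only
          rw [hbi]
          simp [Fin.succ_last]
        · dsimp only
          simp [Fin.succ_castSucc, -Fin.castSucc_succ]
      · -- A2 : j = 0, 1 ≤ i ≤ n
        rw [homFace_zero _ _ _ _ _ j hj0, homFace_mid _ _ _ _ _ i (by omega) (by omega),
          homFace_mid _ _ _ _ _ i.succ (by omega) (by omega),
          homFace_zero _ _ _ _ _ _ (by simpa using hj0)]
        refine Prod.ext ?_ (funext fun t => ?_)
        · dsimp only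
          rw [if_pos (by simp only [Fin.val_succ, Fin.val_zero]; omega), hβr]
          simp
        · dsimp only
          simp only [Fin.val_succ, Fin.coe_castSucc]
          split_ifs <;> first
            | omega
            | rfl
            | simp only [hassoc, hmul, Fin.succ_castSucc, Fin.succ_last, Fin.castSucc_zero,
                Fin.succ_zero_eq_one]
            | simp only [← hmul, Fin.succ_castSucc, Fin.succ_last, Fin.castSucc_zero,
                Fin.succ_zero_eq_one]
  · by_cases hiL : (i:ℕ) = n+1
    · by_cases hjL : (j:ℕ) = n+1
      · -- B3 : j = i = n+1
        rw [homFace_mid _ _ _ _ _ j (by omega) (by omega), homFace_last _ _ _ _ _ i hiL,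
          homFace_last _ _ _ _ _ i.succ (by omega),
          homFace_last _ _ _ _ _ (⟨(j:ℕ), by omega⟩ : Fin (n+2)) (by simpa using hjL)]
        refine Prod.ext ?_ (funext fun t => ?_)
        · dsimp only
          rw [if_neg (by simp only [Fin.val_last]; omega),
            if_pos (by simp only [Fin.val_last]; omega), hlmod]
          simp [Fin.succ_last]
        · dsimp only
          rw [if_pos (by simp only [Fin.coe_castSucc, Fin.val_last]; omega)]
      · -- B2 : 1 ≤ j ≤ n, i = n+1
        rw [homFace_mid _ _ _ _ _ j (by omega) (by omega), homFace_last _ _ _ _ _ i hiL,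
          homFace_last _ _ _ _ _ i.succ (by omega),
          homFace_mid _ _ _ _ _ (⟨(j:ℕ), by omega⟩ : Fin (n+2)) (by omega) (by omega)]
        refine Prod.ext ?_ (funext fun t => ?_)
        · dsimp only
          rw [if_neg (by simp only [Fin.val_last]; omega),
            if_neg (by simp only [Fin.val_last]; omega), hβl]
          simp [Fin.succ_last]
        · dsimp only
          simp only [Fin.val_succ, Fin.coe_castSucc, hmk]
          split_ifs <;> first
            | omega
            | rfl
            | simp only [hassoc, hmul, Fin.succ_castSucc, Fin.succ_last, Fin.castSucc_zero,
                Fin.succ_zero_eq_one]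
            | simp only [← hmul, Fin.succ_castSucc, Fin.succ_last, Fin.castSucc_zero,
                Fin.succ_zero_eq_one]
    · -- B1 : 1 ≤ j ≤ i ≤ n
      rw [homFace_mid _ _ _ _ _ j (by omega) (by omega),
        homFace_mid _ _ _ _ _ i (by omega) (by omega),
        homFace_mid _ _ _ _ _ i.succ (by omega) (by omega),
        homFace_mid _ _ _ _ _ (⟨(j:ℕ), by omega⟩ : Fin (n+2)) (by omega) (by omega)]
      refine Prod.ext rfl (funext fun t => ?_)
      dsimp only
      simp only [Fin.val_succ, Fin.coe_castSucc, hmk]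
      split_ifs <;> first
        | omega
        | rfl
        | simp only [hassoc, hmul, Fin.succ_castSucc, Fin.succ_last, Fin.castSucc_zero,
            Fin.succ_zero_eq_one]
        | simp only [← hmul, Fin.succ_castSucc, Fin.succ_last, Fin.castSucc_zero,
            Fin.succ_zero_eq_one]

end lemmas

/-- For a multiplicative Hom-associative algebra `A` and an `A`-bimodule `(V, β)` with
`β(v·a) = β(v)·α(a)` and `β(a·v) = α(a)·β(v)`, the Hom-Hochschild boundary
`b = Σ (-1)^i δ_i` satisfies `b ∘ b = 0` (stated on the free module spanned by
elementary tensors, `b` being extended linearly via `Finsupp.lift`). -/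
theorem stmt_13 {k A V : Type*} [Field k] [NonUnitalNonAssocRing A] [Module k A]
    [SMulCommClass k A A] [IsScalarTower k A A]
    [AddCommGroup V] [Module k V]
    (α : A →ₗ[k] A)
    (hassoc : ∀ a b c : A, α a * (b * c) = (a * b) * α c)
    (hmul : ∀ a b : A, α (a * b) = α a * α b)
    (β : V →ₗ[k] V) (l : A →ₗ[k] V →ₗ[k] V) (r : V →ₗ[k] A →ₗ[k] V)
    (hlmod : ∀ (a b : A) (v : V), l (a * b) (β v) = l (α a) (l b v))
    (hrmod : ∀ (a b : A) (v : V), r (β v) (a * b) = r (r v a) (α b))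
    (hbi : ∀ (a b : A) (v : V), l (α a) (r v b) = r (l a v) (α b))
    (hβr : ∀ (a : A) (v : V), β (r v a) = r (β v) (α a))
    (hβl : ∀ (a : A) (v : V), β (l a v) = l (α a) (β v))
    (n : ℕ) :
    ∀ x : V × (Fin (n + 2) → A),
      (Finsupp.lift ((V × (Fin n → A)) →₀ k) k (V × (Fin (n + 1) → A)))
        (fun y => ∑ i : Fin (n + 2), ((-1 : k) ^ (i : ℕ)) •
          Finsupp.single
            (homFace (⇑α) (⇑β) (fun a v => l a v) (fun v a => r v a) n i y) (1 : k))
        (∑ i : Fin (n + 3), ((-1 : k) ^ (i : ℕ)) •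
          Finsupp.single
            (homFace (⇑α) (⇑β) (fun a v => l a v) (fun v a => r v a) (n + 1) i x)
            (1 : k)) = 0 := by
  intro x
  set lA : A → A := ⇑α with hlA
  set lB : V → V := ⇑β with hlB
  set lL : A → V → V := fun a v => l a v with hlL
  set lR : V → A → V := fun v a => r v a with hlR
  rw [map_sum]
  simp only [map_smul]
  rw [Finset.sum_congr rfl (fun j _ => by
    rw [Finsupp.lift_apply, Finsupp.sum_single_index (by simp), one_smul])]
  simp only [Finset.smul_sum, smul_smul]
  rw [← Finset.sum_product']
  refine Finset.sum_ninvolution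
    (fun p => if h : (p.1 : ℕ) ≤ (p.2 : ℕ)
      then (p.2.succ, (⟨(p.1 : ℕ), by have := p.2.isLt; omega⟩ : Fin (n+2)))
      else (p.2.castSucc, (⟨(p.1 : ℕ) - 1, by have := p.1.isLt; omega⟩ : Fin (n+2))))
    (fun p => ?_) (fun p _ => ?_) (fun p => Finset.mem_univ _) (fun p => ?_)
  · by_cases h : (p.1 : ℕ) ≤ (p.2 : ℕ)
    · rw [dif_pos h]
      rw [← homFace_comp lA lB lL lR n hassoc hmul hlmod hrmod hbi hβr hβl p.2 p.1 h x,
        ← add_smul]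
      convert zero_smul k _
      simp only [Fin.val_succ]
      rw [pow_succ]
      ring
    · rw [dif_neg h]
      have h2 : ((p.2.castSucc : Fin (n+3)) : ℕ) ≤ ((⟨(p.1 : ℕ) - 1, by have := p.1.isLt; omega⟩ : Fin (n+2)) : ℕ) := by
        simp only [Fin.coe_castSucc]
        omega
      rw [homFace_comp lA lB lL lR n hassoc hmul hlmod hrmod hbi hβr hβl _ _ h2 x]
      have e1 : ((⟨(p.1 : ℕ) - 1, by have := p.1.isLt; omega⟩ : Fin (n+2)).succ : Fin (n+3)) = p.1 := by
        apply Fin.ext; simp [Fin.val_succ]; omega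
      have e2 : (⟨((p.2.castSucc : Fin (n+3)) : ℕ), by simpa using p.2.isLt⟩ : Fin (n+2)) = p.2 := by
        apply Fin.ext; simp
      rw [e1]
      rw [show (⟨((p.2.castSucc : Fin (n+3)) : ℕ), _⟩ : Fin (n+2)) = p.2 from e2]
      rw [← add_smul]
      convert zero_smul k _
      simp only [Fin.coe_castSucc]
      have hp1 : 0 < (p.1 : ℕ) := by omega
      obtain ⟨m, hm⟩ : ∃ m, (p.1 : ℕ) = m + 1 := ⟨(p.1:ℕ) - 1, by omega⟩
      rw [hm]
      simp only [Nat.add_sub_cancel, pow_succ]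
      ring
  · by_cases h : (p.1 : ℕ) ≤ (p.2 : ℕ)
    · rw [dif_pos h]
      intro he
      have := congrArg (fun q => ((q.1 : Fin (n+3)) : ℕ)) he
      simp only [Fin.val_succ] at this
      omega
    · rw [dif_neg h]
      intro he
      have := congrArg (fun q => ((q.1 : Fin (n+3)) : ℕ)) he
      simp only [Fin.coe_castSucc] at this
      omega
  · by_cases h : (p.1 : ℕ) ≤ (p.2 : ℕ)
    · rw [dif_pos h]
      have hc : ¬ ((p.2.succ : Fin (n+3)) : ℕ) ≤ ((⟨(p.1 : ℕ), by have := p.2.isLt; omega⟩ : Fin (n+2)) : ℕ) := by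
        simp only [Fin.val_succ]; omega
      rw [dif_neg hc]
      refine Prod.ext (Fin.ext ?_) (Fin.ext ?_) <;> simp <;> omega
    · rw [dif_neg h]
      have hc : ((p.2.castSucc : Fin (n+3)) : ℕ) ≤ ((⟨(p.1 : ℕ) - 1, by have := p.1.isLt; omega⟩ : Fin (n+2)) : ℕ) := by
        simp only [Fin.coe_castSucc]; omega
      rw [dif_pos hc]
      refine Prod.ext (Fin.ext ?_) (Fin.ext ?_) <;> simp <;> omega
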